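/- Let Φ, Ψ be clause sets, θ₁ = θ₁' ∨ p and θ₂ = θ₂' ∨ ¬p be clauses with resolvent θ = θ₁' ∨ θ₂', and suppose p ∈ sig(Φ) \ sig(Ψ). If χ₁ is an intermediate separator of Φ and Ψ relative to θ₁ and χ₂ is an intermediate separator relative to θ₂, then χ₁ ∨ χ₂ is an intermediate separator of Φ and Ψ relative to θ. -/
import Mathlib


inductive PropForm : Type where
  | var : ℕ → PropForm
  | tru : PropForm
  | fls : PropForm
  | neg : PropForm → PropForm
  | conj : PropForm → PropForm → PropForm
  | disj : PropForm → PropForm → PropForm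
deriving DecidableEq

namespace PropForm

def eval (v : ℕ → Bool) : PropForm → Bool
  | var p => v p
  | tru => true
  | fls => false
  | neg φ => !(eval v φ)
  | conj φ ψ => eval v φ && eval v ψ
  | disj φ ψ => eval v φ || eval v ψ

def sig : PropForm → Finset ℕ
  | var p => {p}
  | tru => ∅
  | fls => ∅
  | neg φ => sig φ
  | conj φ ψ => sig φ ∪ sig ψ
  | disj φ ψ => sig φ ∪ sig ψ

def impl (φ ψ : PropForm) : PropForm := disj (neg φ) ψ

def iff (φ ψ : PropForm) : PropForm := conj (impl φ ψ) (impl ψ φ)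

end PropForm

/-- Semantic entailment: every model of `φ` is a model of `ψ`. -/
def Entails (φ ψ : PropForm) : Prop :=
  ∀ v : ℕ → Bool, φ.eval v = true → ψ.eval v = true

/-- `χ` is an intermediate separator of `Φ` and `Ψ` relative to the clause `θ`. -/
def IsIntermediateSep (Φ Ψ θ χ : PropForm) : Prop :=
  χ.sig ⊆ Φ.sig ∩ Ψ.sig ∧ Entails Φ (θ.disj χ) ∧ Entails Ψ (θ.disj χ.neg)


theorem eval_update_of_notMem (φ : PropForm) (v : ℕ → Bool) (p : ℕ) (b : Bool)
    (hp : p ∉ φ.sig) : φ.eval (Function.update v p b) = φ.eval v := by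
  induction φ with
  | var q =>
    simp only [PropForm.sig, Finset.mem_singleton] at hp
    simp [PropForm.eval, Function.update, Ne.symm hp]
  | tru => rfl
  | fls => rfl
  | neg φ ih => simp only [PropForm.eval, ih hp]
  | conj φ ψ ih1 ih2 =>
    simp only [PropForm.sig, Finset.mem_union, not_or] at hp
    simp only [PropForm.eval, ih1 hp.1, ih2 hp.2]
  | disj φ ψ ih1 ih2 =>
    simp only [PropForm.sig, Finset.mem_union, not_or] at hp
    simp only [PropForm.eval, ih1 hp.1, ih2 hp.2]

/-- Resolution upon an atom `p ∈ sig(Φ) \ sig(Ψ)`: the disjunction of intermediate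
separators for the parent clauses is an intermediate separator for the resolvent. -/
theorem intermediate_sep_resolution_left (Φ Ψ θ₁' θ₂' χ₁ χ₂ : PropForm) (p : ℕ)
    (hp₁ : p ∉ θ₁'.sig) (hp₂ : p ∉ θ₂'.sig)
    (hpΦ : p ∈ Φ.sig) (hpΨ : p ∉ Ψ.sig)
    (h₁ : IsIntermediateSep Φ Ψ (θ₁'.disj (PropForm.var p)) χ₁)
    (h₂ : IsIntermediateSep Φ Ψ (θ₂'.disj (PropForm.var p).neg) χ₂) :
    IsIntermediateSep Φ Ψ (θ₁'.disj θ₂') (χ₁.disj χ₂) := by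
  obtain ⟨hs₁, hΦ₁, hΨ₁⟩ := h₁
  obtain ⟨hs₂, hΦ₂, hΨ₂⟩ := h₂
  have hpχ₁ : p ∉ χ₁.sig := fun h => hpΨ (Finset.mem_inter.1 (hs₁ h)).2
  have hpχ₂ : p ∉ χ₂.sig := fun h => hpΨ (Finset.mem_inter.1 (hs₂ h)).2
  refine ⟨?_, ?_, ?_⟩
  · intro q hq
    simp only [PropForm.sig, Finset.mem_union] at hq
    rcases hq with h | h
    · exact hs₁ h
    · exact hs₂ h
  · intro v hv
    have e1 := hΦ₁ v hv
    have e2 := hΦ₂ v hv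
    simp only [PropForm.eval, Bool.or_eq_true, Bool.not_eq_true'] at e1 e2 ⊢
    cases hvp : v p with
    | true => rcases e2 with (h|h)|h <;> simp_all
    | false => rcases e1 with (h|h)|h <;> simp_all
  · intro v hv
    simp only [PropForm.eval, Bool.or_eq_true, Bool.not_eq_true', Bool.or_eq_false_iff]
    by_cases hc1 : χ₁.eval v = true
    · -- use v with p := false
      have hv' : Ψ.eval (Function.update v p false) = true := by
        rw [eval_update_of_notMem _ _ _ _ hpΨ]; exact hv
      have e := hΨ₁ _ hv'
      simp only [PropForm.eval, Bool.or_eq_true, Bool.not_eq_true',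
        Function.update_self, eval_update_of_notMem _ _ _ _ hp₁,
        eval_update_of_notMem _ _ _ _ hpχ₁] at e
      rcases e with (h|h)|h <;> simp_all
    · by_cases hc2 : χ₂.eval v = true
      · have hv' : Ψ.eval (Function.update v p true) = true := by
          rw [eval_update_of_notMem _ _ _ _ hpΨ]; exact hv
        have e := hΨ₂ _ hv'
        simp only [PropForm.eval, Bool.or_eq_true, Bool.not_eq_true',
          Function.update_self, eval_update_of_notMem _ _ _ _ hp₂,
          eval_update_of_notMem _ _ _ _ hpχ₂] at e
        rcases e with (h|h)|h <;> simp_all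
      · simp_all
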